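/- Let r and s be nonzero integers with r ≥ 1 and gcd(r, s) = 1, and let n ≥ 2 be such that u_n(r) − s − 1 ≥ 2. Then the tuple (q_1, …, q_n) = (u_1(r), u_2(r), …, u_{n−1}(r), u_n(r) − s − 1) consists of positive integers and satisfies r·(1/q_1 + ⋯ + 1/q_n) − s/(q_1·q_2⋯q_n) = 1; in particular, the bound q_n ≤ u_n(r) − s − 1 of the previous result is attained whenever u_n(r) > s². -/

import Mathlib

open Finset

private lemma upos_aux (r : ℤ) (hr : 1 ≤ r) (u : ℕ → ℤ) (hu1 : u 1 = r + 1)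
    (hu : ∀ k, 1 ≤ k → u (k + 1) = r * (∏ i ∈ Finset.Icc 1 k, u i) + 1) :
    ∀ k, 1 ≤ k → 0 < u k := by
  intro k
  induction k using Nat.strong_induction_on with
  | _ k ih =>
    intro hk
    match k, hk with
    | 1, _ => rw [hu1]; omega
    | (j+2), _ =>
      rw [hu (j+1) (by omega)]
      have hp : 0 < ∏ i ∈ Finset.Icc 1 (j+1), u i := by
        apply Finset.prod_pos
        intro i hi
        simp only [Finset.mem_Icc] at hi
        exact ih i (by omega) hi.1
      nlinarith

private lemma key_identity (r : ℤ) (hr : 1 ≤ r) (u : ℕ → ℤ) (hu1 : u 1 = r + 1)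
    (hu : ∀ k, 1 ≤ k → u (k + 1) = r * (∏ i ∈ Finset.Icc 1 k, u i) + 1) :
    ∀ m, 1 ≤ m →
      (r : ℚ) * ∑ i ∈ Finset.Icc 1 m, ((u i : ℚ))⁻¹
        = 1 - (∏ i ∈ Finset.Icc 1 m, (u i : ℚ))⁻¹ := by
  have upos := upos_aux r hr u hu1 hu
  intro m hm
  induction m with
  | zero => omega
  | succ m ih =>
    rcases Nat.eq_or_lt_of_le hm with h | h
    · -- m + 1 = 1
      have : m = 0 := by omega
      subst this
      simp [hu1]
      have : (r : ℚ) + 1 ≠ 0 := by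
        have : (1:ℚ) ≤ (r:ℚ) := by exact_mod_cast hr
        positivity
      field_simp
      ring
    · have hm1 : 1 ≤ m := by omega
      have ih := ih hm1
      rw [Finset.sum_Icc_succ_top (by omega), Finset.prod_Icc_succ_top (by omega)]
      have hP : (0:ℚ) < ∏ i ∈ Finset.Icc 1 m, (u i : ℚ) := by
        apply Finset.prod_pos
        intro i hi
        simp only [Finset.mem_Icc] at hi
        exact_mod_cast upos i hi.1
      have hur : (u (m+1) : ℚ) = r * (∏ i ∈ Finset.Icc 1 m, (u i : ℚ)) + 1 := by
        rw [hu m hm1]; push_cast; ring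
      set P : ℚ := ∏ i ∈ Finset.Icc 1 m, (u i : ℚ) with hPdef
      have hu1pos : (0:ℚ) < (u (m+1) : ℚ) := by exact_mod_cast upos (m+1) (by omega)
      rw [mul_add, ih, hur]
      have h1 : P ≠ 0 := ne_of_gt hP
      have h2 : (r:ℚ) * P + 1 ≠ 0 := by rw [← hur]; exact ne_of_gt hu1pos
      field_simp
      ring

theorem extremal_solution_attains_bound
    (r s : ℤ) (hr : 1 ≤ r) (hs : s ≠ 0) (hrs : Int.gcd r s = 1)
    (n : ℕ) (hn : 2 ≤ n)
    (u : ℕ → ℤ) (hu1 : u 1 = r + 1)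
    (hu : ∀ k, 1 ≤ k → u (k + 1) = r * (∏ i ∈ Finset.Icc 1 k, u i) + 1)
    (hbig : 2 ≤ u n - s - 1)
    (q : Fin n → ℤ)
    (hqdef : ∀ i : Fin n, q i = if (i : ℕ) + 1 < n then u ((i : ℕ) + 1) else u n - s - 1) :
    (∀ i, 0 < q i) ∧
      (r : ℚ) * (∑ i, ((q i : ℚ))⁻¹) - (s : ℚ) / (∏ i, (q i : ℚ)) = 1 := by
  have upos := upos_aux r hr u hu1 hu
  constructor
  · intro i
    rw [hqdef i]
    split
    · exact upos _ (by omega)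
    · omega
  · obtain ⟨m, rfl⟩ : ∃ m, n = m + 1 := ⟨n - 1, by omega⟩
    have hm1 : 1 ≤ m := by omega
    have hcast : ∀ i : Fin m, q (Fin.castSucc i) = u ((i : ℕ) + 1) := by
      intro i
      rw [hqdef]
      simp only [Fin.coe_castSucc]
      rw [if_pos (by omega)]
    have hlast : q (Fin.last m) = u (m+1) - s - 1 := by
      rw [hqdef]
      simp
    -- sums over Fin m of u (i+1) equal sums over Icc 1 m
    have hsum : ∑ i : Fin m, ((u ((i:ℕ)+1) : ℚ))⁻¹
        = ∑ i ∈ Finset.Icc 1 m, ((u i : ℚ))⁻¹ := by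
      rw [Fin.sum_univ_eq_sum_range (fun j => ((u (j+1) : ℚ))⁻¹) m]
      rw [show Finset.Icc 1 m = Finset.Ico 1 (m+1) by rfl]
      rw [Finset.sum_Ico_eq_sum_range]
      simp [add_comm]
    have hprod : ∏ i : Fin m, ((u ((i:ℕ)+1) : ℚ))
        = ∏ i ∈ Finset.Icc 1 m, ((u i : ℚ)) := by
      rw [Fin.prod_univ_eq_prod_range (fun j => ((u (j+1) : ℚ))) m]
      rw [show Finset.Icc 1 m = Finset.Ico 1 (m+1) by rfl]
      rw [Finset.prod_Ico_eq_prod_range]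
      simp [add_comm]
    rw [Fin.sum_univ_castSucc, Fin.prod_univ_castSucc]
    simp only [hcast, hlast, hsum, hprod]
    set P : ℚ := ∏ i ∈ Finset.Icc 1 m, (u i : ℚ) with hPdef
    have hP : (0:ℚ) < P := by
      apply Finset.prod_pos
      intro i hi
      simp only [Finset.mem_Icc] at hi
      exact_mod_cast upos i hi.1
    have key := key_identity r hr u hu1 hu m hm1
    rw [← hPdef] at key
    have hur : (u (m+1) : ℚ) = r * P + 1 := by
      rw [hu m hm1]; push_cast; rw [hPdef]
    have hq : ((u (m+1) - s - 1 : ℤ) : ℚ) = r * P - s := by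
      push_cast; rw [hur]; ring
    have hqne : (0:ℚ) < (r:ℚ) * P - s := by
      rw [← hq]; exact_mod_cast (by omega : (0:ℤ) < u (m+1) - s - 1)
    rw [hq, mul_add, key]
    have h1 : P ≠ 0 := ne_of_gt hP
    have h2 : (r:ℚ) * P - s ≠ 0 := ne_of_gt hqne
    field_simp
    ring
    have h3 : P * (r:ℚ) - s ≠ 0 := by rw [mul_comm]; exact h2
    have h4 : P * (r:ℚ) * (P * (r:ℚ) - s)⁻¹ - (s:ℚ) * (P * (r:ℚ) - s)⁻¹ = 1 := by
      rw [← sub_mul, mul_inv_cancel₀ h3]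
    linarith
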